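/- Let p < q be primes, 0 ≤ k < φ(pq), and 0 ≤ j < p. Among i ∈ {0, 1, ..., q-1}, there are at most two values of i for which the k-th coefficient of the remainder of x^{j+ip} modulo Φ_{pq}(x) is nonzero; moreover these coefficients sum to zero over all i, so either all are zero or exactly one is +1 and one is -1. -/

import Mathlib

open Polynomial Finset

namespace CyclHelp

lemma cancel_mod {p q x y : ℕ} (hcop : Nat.Coprime p q)
    (hx : x < p) (hy : y < p) (h : x * q ≡ y * q [MOD p]) : x = y := by
  have h' : q * x ≡ q * y [MOD p] := by rwa [mul_comm x q, mul_comm y q] at h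
  exact Nat.ModEq.eq_of_lt_of_lt (Nat.ModEq.cancel_left_of_coprime hcop h') hx hy

lemma rep_unique {p q a b a' b' : ℕ} (hp : 0 < p) (hcop : Nat.Coprime p q)
    (hb : b < p) (hb' : b' < p)
    (h : a * p + b * q = a' * p + b' * q) : a = a' ∧ b = b' := by
  have hbb : b = b' := by
    apply cancel_mod hcop hb hb'
    have h1 : (a * p + b * q) % p = (a' * p + b' * q) % p := by rw [h]
    simpa [Nat.ModEq, Nat.add_mul_mod_self_left, Nat.mul_mod_left, Nat.add_mod,
      Nat.mul_mod_left] using h1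
  subst hbb
  refine ⟨Nat.eq_of_mul_eq_mul_right hp ?_, rfl⟩
  omega

lemma rep_exists {p q : ℕ} (hp : p.Prime) (hq : q.Prime) (hne : p ≠ q) (k : ℕ) (hk : k < p * q) :
    ∃ a b, a < q ∧ b < p ∧ (a * p + b * q = k ∨ a * p + b * q = k + p * q) := by
  haveI := Fact.mk hp
  have hq0 : (q : ZMod p) ≠ 0 := by
    intro h0
    have : p ∣ q := (ZMod.natCast_eq_zero_iff _ _).mp h0
    exact hne ((Nat.prime_dvd_prime_iff_eq hp hq).mp this)
  set b : ℕ := ((k : ZMod p) * (q : ZMod p)⁻¹).val with hbdef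
  have hblt : b < p := ZMod.val_lt _
  have hbq : (b * q : ZMod p) = (k : ZMod p) := by
    push_cast
    rw [hbdef, ZMod.natCast_val, ZMod.cast_id]
    field_simp
  have hble : b * q ≤ p * q := Nat.mul_le_mul (le_of_lt hblt) le_rfl
  have hdvd : p ∣ k + p * q - b * q := by
    have h1 : ((k + p * q - b * q : ℕ) : ZMod p) = 0 := by
      rw [Nat.cast_sub (le_trans hble (Nat.le_add_left _ _))]
      push_cast
      rw [hbq]
      simp
    exact (ZMod.natCast_eq_zero_iff _ _).mp h1
  obtain ⟨c, hc⟩ := hdvd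
  have hpq2 : p * (2 * q) = p * q + p * q := by ring
  have hclt : c < 2 * q := by
    have h2 : p * c < p * (2 * q) := by omega
    exact Nat.lt_of_mul_lt_mul_left h2
  have hcomm : c * p = p * c := mul_comm _ _
  rcases le_or_gt q c with hcq | hcq
  · refine ⟨c - q, b, by omega, hblt, Or.inl ?_⟩
    have hsub : (c - q) * p = c * p - q * p := Nat.sub_mul _ _ _
    have hqp : q * p = p * q := mul_comm _ _
    have hmono : q * p ≤ c * p := Nat.mul_le_mul_right _ hcq
    omega
  · refine ⟨c, b, hcq, hblt, Or.inr ?_⟩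
    omega

end CyclHelp

namespace CyclHelp2
open CyclHelp

variable {p q : ℕ}

lemma dvd_EQ (hp : p.Prime) (hq : q.Prime) (hne : p ≠ q) :
    cyclotomic (p * q) ℤ ∣ ∑ i ∈ range q, (X : ℤ[X]) ^ (i * p) := by
  haveI := Fact.mk hq
  have hnd : ¬ p ∣ q := fun hdvd => hne ((Nat.prime_dvd_prime_iff_eq hp hq).mp hdvd)
  have h := cyclotomic_expand_eq_cyclotomic_mul (R := ℤ) hp hnd
  have h2 : (expand ℤ p) (cyclotomic q ℤ) = ∑ i ∈ range q, (X : ℤ[X]) ^ (i * p) := by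
    rw [cyclotomic_prime, map_sum]
    refine Finset.sum_congr rfl fun i _ => ?_
    rw [map_pow, expand_X, ← pow_mul, mul_comm p i]
  rw [h2] at h
  rw [h, mul_comm p q]
  exact dvd_mul_right _ _

lemma dvd_EP (hp : p.Prime) (hq : q.Prime) (hne : p ≠ q) :
    cyclotomic (p * q) ℤ ∣ ∑ i ∈ range p, (X : ℤ[X]) ^ (i * q) := by
  have := dvd_EQ hq hp (Ne.symm hne)
  rwa [mul_comm q p] at this

lemma dvd_pow_sub_one : cyclotomic (p * q) ℤ ∣ (X : ℤ[X]) ^ (p * q) - 1 :=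
  cyclotomic.dvd_X_pow_sub_one _ _

lemma dvd_of_dvd_shift (f : ℤ[X]) (h : cyclotomic (p * q) ℤ ∣ (X : ℤ[X]) ^ (p * q) * f) :
    cyclotomic (p * q) ℤ ∣ f := by
  have h2 : cyclotomic (p * q) ℤ ∣ ((X : ℤ[X]) ^ (p * q) - 1) * f :=
    Dvd.dvd.mul_right dvd_pow_sub_one f
  have : f = (X : ℤ[X]) ^ (p * q) * f - ((X : ℤ[X]) ^ (p * q) - 1) * f := by ring
  rw [this]
  exact dvd_sub h h2

lemma mod_eq_of (f R : ℤ[X]) (hdvd : cyclotomic (p * q) ℤ ∣ f - R)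
    (hdeg : R.degree < (cyclotomic (p * q) ℤ).degree) :
    f %ₘ cyclotomic (p * q) ℤ = R := by
  obtain ⟨c, hc⟩ := hdvd
  have hf : f = R + cyclotomic (p * q) ℤ * c := by linear_combination hc
  rw [hf, add_modByMonic, self_mul_modByMonic (cyclotomic.monic _ _), add_zero,
    (modByMonic_eq_self_iff (cyclotomic.monic _ _)).mpr hdeg]

lemma deg_sum_lt {ι : Type*} (s : Finset ι) (e : ι → ℕ) (N : ℕ)
    (h : ∀ x ∈ s, e x < N) : (∑ x ∈ s, (X : ℤ[X]) ^ (e x)).degree < (N : ℕ) := by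
  refine lt_of_le_of_lt (degree_sum_le _ _) ?_
  rw [Finset.sup_lt_iff (by exact_mod_cast WithBot.bot_lt_coe N)]
  intro x hx
  rw [degree_X_pow]
  exact_mod_cast WithBot.coe_lt_coe.mpr (h x hx)

lemma coeff_sum_X_pow {ι : Type*} [DecidableEq ι] (s : Finset ι) (e : ι → ℕ)
    (hinj : ∀ x ∈ s, ∀ y ∈ s, e x = e y → x = y) (n : ℕ) :
    (∑ x ∈ s, (X : ℤ[X]) ^ (e x)).coeff n = if ∃ x ∈ s, e x = n then 1 else 0 := by
  rw [finset_sum_coeff]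
  by_cases h : ∃ x ∈ s, e x = n
  · obtain ⟨x₀, hx₀, hex₀⟩ := h
    rw [if_pos ⟨x₀, hx₀, hex₀⟩]
    rw [Finset.sum_eq_single_of_mem x₀ hx₀]
    · rw [coeff_X_pow, if_pos hex₀.symm]
    · intro y hy hne
      rw [coeff_X_pow, if_neg]
      intro hne2
      exact hne (hinj y hy x₀ hx₀ (by rw [hex₀, hne2]))
  · rw [if_neg h]
    refine Finset.sum_eq_zero fun x hx => ?_
    rw [coeff_X_pow, if_neg fun hh => h ⟨x, hx, hh.symm⟩]

end CyclHelp2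

namespace CyclCase
open CyclHelp CyclHelp2

variable {p q : ℕ}

lemma Nfact (hp : 0 < p) (hq : 0 < q) : (p-1)*(q-1) + p + q = p*q + 1 := by
  obtain ⟨p', rfl⟩ : ∃ p', p = p' + 1 := ⟨p - 1, by omega⟩
  obtain ⟨q', rfl⟩ : ∃ q', q = q' + 1 := ⟨q - 1, by omega⟩
  simp only [Nat.add_sub_cancel]
  ring

lemma rem_rect (hp : p.Prime) (hq : q.Prime) (hpq : p < q) (α β : ℕ) (hα : α < q) (hβ : β < p)
    (hN : (p-1)*(q-1) ≤ α*p + β*q) (hub : α*p + β*q ≤ p*q - q) :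
    (X : ℤ[X])^(α*p+β*q) %ₘ cyclotomic (p*q) ℤ =
      -(∑ x ∈ ((range (α+1)) ×ˢ (range (β+1))).erase (α,β), (X:ℤ[X])^(x.1*p+x.2*q))
      + ∑ x ∈ (Ico (α+1) q) ×ˢ (Ico (β+1) p), (X:ℤ[X])^(x.1*p+x.2*q - p*q) := by
  have hNf := Nfact hp.pos hq.pos
  have hqple : q ≤ p * q := Nat.le_mul_of_pos_left q hp.pos
  have hsubq : p*q - q + q = p*q := Nat.sub_add_cancel hqple
  set m := α*p + β*q with hm
  set L := ∑ x ∈ ((range (α+1)) ×ˢ (range (β+1))).erase (α,β), (X:ℤ[X])^(x.1*p+x.2*q) with hL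
  set U := ∑ x ∈ (Ico (α+1) q) ×ˢ (Ico (β+1) p), (X:ℤ[X])^(x.1*p+x.2*q - p*q) with hU
  have hup : ∀ x ∈ (Ico (α+1) q) ×ˢ (Ico (β+1) p), p*q ≤ x.1*p+x.2*q ∧ x.1*p+x.2*q - p*q < (p-1)*(q-1) := by
    rintro ⟨x1, x2⟩ hx
    rw [Finset.mem_product, Finset.mem_Ico, Finset.mem_Ico] at hx
    dsimp only
    have h1 : (α+1)*p ≤ x1*p := Nat.mul_le_mul_right p hx.1.1
    have h2 : (β+1)*q ≤ x2*q := Nat.mul_le_mul_right q hx.2.1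
    have h3 : (α+1)*p = α*p + p := by ring
    have h4 : (β+1)*q = β*q + q := by ring
    have h5 : x1*p + p ≤ q*p := by
      have := Nat.mul_le_mul_right p hx.1.2
      calc x1*p + p = (x1+1)*p := by ring
        _ ≤ q*p := this
    have h6 : x2*q + q ≤ p*q := by
      have := Nat.mul_le_mul_right q hx.2.2
      calc x2*q + q = (x2+1)*q := by ring
        _ ≤ p*q := this
    have h7 : q*p = p*q := mul_comm _ _
    omega
  apply mod_eq_of
  · apply dvd_of_dvd_shift
    have hXU : (X:ℤ[X])^(p*q) * U = ∑ x ∈ (Ico (α+1) q) ×ˢ (Ico (β+1) p), (X:ℤ[X])^(x.1*p+x.2*q) := by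
      rw [hU, Finset.mul_sum]
      refine Finset.sum_congr rfl fun x hx => ?_
      rw [← pow_add]
      congr 1
      have := (hup x hx).1
      omega
    have hfull : L + (X:ℤ[X])^m = ∑ x ∈ (range (α+1)) ×ˢ (range (β+1)), (X:ℤ[X])^(x.1*p+x.2*q) := by
      rw [hL]
      have hmem : (α, β) ∈ (range (α+1)) ×ˢ (range (β+1)) := by
        rw [Finset.mem_product]; simp
      exact Finset.sum_erase_add _ _ hmem
    have hprod : ∀ (s t : Finset ℕ), (∑ x ∈ s ×ˢ t, (X:ℤ[X])^(x.1*p+x.2*q)) =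
        (∑ i ∈ s, (X:ℤ[X])^(i*p)) * (∑ j ∈ t, (X:ℤ[X])^(j*q)) := by
      intro s t
      rw [Finset.sum_mul_sum, Finset.sum_product]
      refine Finset.sum_congr rfl fun i _ => Finset.sum_congr rfl fun j _ => ?_
      rw [← pow_add]
    have key : (X:ℤ[X])^(p*q) * ((X:ℤ[X])^m - (-L + U)) =
        (X:ℤ[X])^(p*q) * (L + (X:ℤ[X])^m) - ((X:ℤ[X])^(p*q) * U) := by ring
    rw [key, hXU, hfull, hprod, hprod]
    set A := ∑ i ∈ range (α+1), (X:ℤ[X])^(i*p) with hA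
    set A' := ∑ i ∈ Ico (α+1) q, (X:ℤ[X])^(i*p) with hA'
    set B := ∑ j ∈ range (β+1), (X:ℤ[X])^(j*q) with hB
    set B' := ∑ j ∈ Ico (β+1) p, (X:ℤ[X])^(j*q) with hB'
    set EQ := ∑ i ∈ range q, (X:ℤ[X])^(i*p) with hEQ
    set EP := ∑ j ∈ range p, (X:ℤ[X])^(j*q) with hEP
    have hAA : A + A' = EQ := Finset.sum_range_add_sum_Ico _ hα
    have hBB : B + B' = EP := Finset.sum_range_add_sum_Ico _ hβ
    have hsplit : (X:ℤ[X])^(p*q) * (A * B) - A' * B' =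
        ((X:ℤ[X])^(p*q) - 1) * (A*B) + EQ * B + EP * A - EQ * EP := by
      have h1 : A' = EQ - A := by linear_combination hAA
      have h2 : B' = EP - B := by linear_combination hBB
      rw [h1, h2]; ring
    rw [hsplit]
    refine dvd_sub (dvd_add (dvd_add ?_ ?_) ?_) ?_
    · exact Dvd.dvd.mul_right dvd_pow_sub_one _
    · exact Dvd.dvd.mul_right (dvd_EQ hp hq hpq.ne) _
    · exact Dvd.dvd.mul_right (dvd_EP hp hq hpq.ne) _
    · exact Dvd.dvd.mul_right (dvd_EQ hp hq hpq.ne) _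
  · have htot : (cyclotomic (p*q) ℤ).degree = (((p-1)*(q-1) : ℕ) : WithBot ℕ) := by
      rw [degree_cyclotomic, Nat.totient_mul ((Nat.coprime_primes hp hq).mpr hpq.ne),
        Nat.totient_prime hp, Nat.totient_prime hq]
    rw [htot]
    refine lt_of_le_of_lt (degree_add_le _ _) (max_lt ?_ ?_)
    · rw [degree_neg]
      refine deg_sum_lt _ _ _ ?_
      rintro ⟨x1, x2⟩ hx
      rw [Finset.mem_erase, Finset.mem_product, Finset.mem_range, Finset.mem_range] at hx
      dsimp only
      obtain ⟨hne, hx1, hx2⟩ := hx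
      have h1 : x1*p ≤ α*p := Nat.mul_le_mul_right p (by omega)
      have h2 : x2*q ≤ β*q := Nat.mul_le_mul_right q (by omega)
      rcases Nat.lt_or_ge x1 α with hlt | hge
      · have h3 : x1*p + p ≤ α*p := by
          calc x1*p + p = (x1+1)*p := by ring
            _ ≤ α*p := Nat.mul_le_mul_right p hlt
        omega
      · have hx1e : x1 = α := by omega
        have hx2lt : x2 < β := by
          by_contra h
          have hx2e : x2 = β := by omega
          exact hne (by rw [hx1e, hx2e])
        have h3 : x2*q + q ≤ β*q := by
          calc x2*q + q = (x2+1)*q := by ring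
            _ ≤ β*q := Nat.mul_le_mul_right q hx2lt
        omega
    · refine deg_sum_lt _ _ _ ?_
      intro x hx
      exact (hup x hx).2

end CyclCase

namespace CyclCase2
open CyclHelp CyclHelp2 CyclCase

variable {p q : ℕ}

lemma coeff_rect (hp : p.Prime) (hq : q.Prime) (hpq : p < q) (α β : ℕ) (hα : α < q) (hβ : β < p)
    (hN : (p-1)*(q-1) ≤ α*p + β*q) (hub : α*p + β*q ≤ p*q - q)
    (k a b : ℕ) (hk : k < (p-1)*(q-1)) (ha : a < q) (hb : b < p)
    (hv : a*p+b*q = k ∨ a*p+b*q = k+p*q) :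
    ((X:ℤ[X])^(α*p+β*q) %ₘ cyclotomic (p*q) ℤ).coeff k =
      (if a*p+b*q = k ∧ a ≤ α ∧ b ≤ β then -1 else 0)
    + (if a*p+b*q = k + p*q ∧ α < a ∧ β < b then 1 else 0) := by
  have hcop : Nat.Coprime p q := (Nat.coprime_primes hp hq).mpr hpq.ne
  have hNf := Nfact hp.pos hq.pos
  have hqple : q ≤ p * q := Nat.le_mul_of_pos_left q hp.pos
  have hsubq : p*q - q + q = p*q := Nat.sub_add_cancel hqple
  rw [rem_rect hp hq hpq α β hα hβ hN hub, coeff_add, coeff_neg]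
  have hup : ∀ x ∈ (Ico (α+1) q) ×ˢ (Ico (β+1) p), p*q ≤ x.1*p+x.2*q := by
    rintro ⟨x1, x2⟩ hx
    rw [Finset.mem_product, Finset.mem_Ico, Finset.mem_Ico] at hx
    dsimp only
    have h1 : (α+1)*p ≤ x1*p := Nat.mul_le_mul_right p hx.1.1
    have h2 : (β+1)*q ≤ x2*q := Nat.mul_le_mul_right q hx.2.1
    have h3 : (α+1)*p = α*p + p := by ring
    have h4 : (β+1)*q = β*q + q := by ring
    omega
  rw [coeff_sum_X_pow _ _ ?inj1, coeff_sum_X_pow _ _ ?inj2]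
  case inj1 =>
    rintro ⟨x1, x2⟩ hx ⟨y1, y2⟩ hy hexy
    rw [Finset.mem_erase, Finset.mem_product, Finset.mem_range, Finset.mem_range] at hx hy
    dsimp only at hexy
    have := rep_unique hp.pos hcop (by omega : x2 < p) (by omega : y2 < p) hexy
    simp [this.1, this.2]
  case inj2 =>
    rintro ⟨x1, x2⟩ hx ⟨y1, y2⟩ hy hexy
    have hx' := hup _ hx
    have hy' := hup _ hy
    rw [Finset.mem_product, Finset.mem_Ico, Finset.mem_Ico] at hx hy
    dsimp only at hexy hx' hy' ⊢
    have hexy2 : x1*p + x2*q = y1*p + y2*q := by omega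
    have := rep_unique hp.pos hcop (by omega : x2 < p) (by omega : y2 < p) hexy2
    simp [this.1, this.2]
  have h₁ : (∃ x ∈ (range (α+1) ×ˢ range (β+1)).erase (α, β), x.1*p + x.2*q = k) ↔
      (a*p+b*q = k ∧ a ≤ α ∧ b ≤ β) := by
    constructor
    · rintro ⟨⟨x1, x2⟩, hxmem, hxe⟩
      rw [Finset.mem_erase, Finset.mem_product, Finset.mem_range, Finset.mem_range] at hxmem
      dsimp only at hxe
      obtain ⟨hne, hx1, hx2⟩ := hxmem
      rcases hv with hv | hv
      · have := rep_unique hp.pos hcop hb (by omega : x2 < p) (by rw [hv, ← hxe])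
        refine ⟨hv, by omega, by omega⟩
      · exfalso
        have heq : a*p + b*q = (x1 + q)*p + x2*q := by
          have : (x1+q)*p = x1*p + q*p := by ring
          have hc : q*p = p*q := mul_comm _ _
          omega
        have := rep_unique hp.pos hcop hb (by omega : x2 < p) heq
        omega
    · rintro ⟨hv1, haα, hbβ⟩
      refine ⟨(a, b), ?_, hv1⟩
      rw [Finset.mem_erase, Finset.mem_product, Finset.mem_range, Finset.mem_range]
      refine ⟨?_, by omega, by omega⟩
      intro hcon
      rw [Prod.mk.injEq] at hcon
      obtain ⟨h1, h2⟩ := hcon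
      subst h1; subst h2
      omega
  have h₂ : (∃ x ∈ Ico (α+1) q ×ˢ Ico (β+1) p, x.1*p + x.2*q - p*q = k) ↔
      (a*p+b*q = k + p*q ∧ α < a ∧ β < b) := by
    constructor
    · rintro ⟨⟨x1, x2⟩, hxmem, hxe⟩
      have hx' := hup _ hxmem
      rw [Finset.mem_product, Finset.mem_Ico, Finset.mem_Ico] at hxmem
      dsimp only at hxe hx'
      have hxe2 : x1*p + x2*q = k + p*q := by omega
      rcases hv with hv | hv
      · exfalso
        have heq : x1*p + x2*q = (a + q)*p + b*q := by
          have : (a+q)*p = a*p + q*p := by ring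
          have hc : q*p = p*q := mul_comm _ _
          omega
        have := rep_unique hp.pos hcop (by omega : x2 < p) hb heq
        omega
      · have := rep_unique hp.pos hcop (by omega : x2 < p) hb (by rw [hxe2, ← hv])
        exact ⟨hv, by omega, by omega⟩
    · rintro ⟨hv1, hαa, hβb⟩
      refine ⟨(a, b), ?_, by dsimp only; omega⟩
      rw [Finset.mem_product, Finset.mem_Ico, Finset.mem_Ico]
      exact ⟨⟨by omega, ha⟩, by omega, hb⟩
  simp only [h₁, h₂]
  split_ifs <;> norm_num

end CyclCase2

namespace CyclCase3
open CyclHelp CyclHelp2 CyclCase CyclCase2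

variable {p q : ℕ}

lemma rem_row (hp : p.Prime) (hq : q.Prime) (hpq : p < q) (α β : ℕ) (hα : α < q) (hβ : β < p)
    (hlow : p*q - q < α*p + β*q) (hhigh : α*p + β*q < (p-1)*(q-1) + q) :
    (X : ℤ[X])^(α*p+β*q) %ₘ cyclotomic (p*q) ℤ =
      -(∑ j' ∈ range β, (X:ℤ[X])^(α*p+j'*q))
      - ∑ j' ∈ Ico (β+1) p, (X:ℤ[X])^(α*p+j'*q - p*q) := by
  have hNf := Nfact hp.pos hq.pos
  have hqple : q ≤ p * q := Nat.le_mul_of_pos_left q hp.pos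
  have hsubq : p*q - q + q = p*q := Nat.sub_add_cancel hqple
  set m := α*p + β*q with hm
  set S₁ := ∑ j' ∈ range β, (X:ℤ[X])^(α*p+j'*q) with hS₁
  set S₂ := ∑ j' ∈ Ico (β+1) p, (X:ℤ[X])^(α*p+j'*q - p*q) with hS₂
  have hup : ∀ j' ∈ Ico (β+1) p, p*q ≤ α*p + j'*q ∧ α*p+j'*q - p*q < (p-1)*(q-1) := by
    intro j' hj'
    rw [Finset.mem_Ico] at hj'
    have h1 : (β+1)*q ≤ j'*q := Nat.mul_le_mul_right q hj'.1
    have h2 : (β+1)*q = β*q + q := by ring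
    have h3 : j'*q + q ≤ p*q := by
      calc j'*q + q = (j'+1)*q := by ring
        _ ≤ p*q := Nat.mul_le_mul_right q hj'.2
    have h4 : α*p + p ≤ q*p := by
      calc α*p + p = (α+1)*p := by ring
        _ ≤ q*p := Nat.mul_le_mul_right p hα
    have h5 : q*p = p*q := mul_comm _ _
    omega
  apply mod_eq_of
  · apply dvd_of_dvd_shift
    have hXS₂ : (X:ℤ[X])^(p*q) * S₂ = ∑ j' ∈ Ico (β+1) p, (X:ℤ[X])^(α*p+j'*q) := by
      rw [hS₂, Finset.mul_sum]
      refine Finset.sum_congr rfl fun j' hj' => ?_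
      rw [← pow_add]
      congr 1
      have := (hup j' hj').1
      omega
    have hsplit : (X:ℤ[X])^(α*p) * (∑ j' ∈ range p, (X:ℤ[X])^(j'*q)) =
        S₁ + (X:ℤ[X])^m + ∑ j' ∈ Ico (β+1) p, (X:ℤ[X])^(α*p+j'*q) := by
      rw [Finset.mul_sum]
      simp_rw [← pow_add]
      rw [← Finset.sum_range_add_sum_Ico (fun j' => (X:ℤ[X])^(α*p+j'*q)) (by omega : β+1 ≤ p),
        Finset.sum_range_succ]
    have key : (X:ℤ[X])^(p*q) * ((X:ℤ[X])^m - (-S₁ - S₂)) =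
        ((X:ℤ[X])^(p*q) - 1) * ((X:ℤ[X])^m + S₁) +
          ((S₁ + (X:ℤ[X])^m + (X:ℤ[X])^(p*q) * S₂)) := by ring
    rw [key, hXS₂, ← hsplit]
    exact dvd_add (Dvd.dvd.mul_right dvd_pow_sub_one _)
      (Dvd.dvd.mul_left (dvd_EP hp hq hpq.ne) _)
  · have htot : (cyclotomic (p*q) ℤ).degree = (((p-1)*(q-1) : ℕ) : WithBot ℕ) := by
      rw [degree_cyclotomic, Nat.totient_mul ((Nat.coprime_primes hp hq).mpr hpq.ne),
        Nat.totient_prime hp, Nat.totient_prime hq]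
    rw [htot, sub_eq_add_neg]
    refine lt_of_le_of_lt (degree_add_le _ _) (max_lt ?_ ?_)
    · rw [degree_neg]
      refine deg_sum_lt _ _ _ ?_
      intro j' hj'
      rw [Finset.mem_range] at hj'
      have h1 : j'*q + q ≤ β*q := by
        calc j'*q + q = (j'+1)*q := by ring
          _ ≤ β*q := Nat.mul_le_mul_right q hj'
      omega
    · rw [degree_neg]
      refine deg_sum_lt _ _ _ ?_
      intro j' hj'
      exact (hup j' hj').2

lemma coeff_row (hp : p.Prime) (hq : q.Prime) (hpq : p < q) (α β : ℕ) (hα : α < q) (hβ : β < p)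
    (hlow : p*q - q < α*p + β*q) (hhigh : α*p + β*q < (p-1)*(q-1) + q)
    (k a b : ℕ) (hk : k < (p-1)*(q-1)) (ha : a < q) (hb : b < p)
    (hv : a*p+b*q = k ∨ a*p+b*q = k+p*q) :
    ((X:ℤ[X])^(α*p+β*q) %ₘ cyclotomic (p*q) ℤ).coeff k =
      (if a*p+b*q = k ∧ a = α ∧ b < β then -1 else 0)
    + (if a*p+b*q = k + p*q ∧ a = α ∧ β < b then -1 else 0) := by
  have hcop : Nat.Coprime p q := (Nat.coprime_primes hp hq).mpr hpq.ne
  have hNf := Nfact hp.pos hq.pos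
  have hqple : q ≤ p * q := Nat.le_mul_of_pos_left q hp.pos
  have hsubq : p*q - q + q = p*q := Nat.sub_add_cancel hqple
  have hup : ∀ j' ∈ Ico (β+1) p, p*q ≤ α*p + j'*q := by
    intro j' hj'
    rw [Finset.mem_Ico] at hj'
    have h1 : (β+1)*q ≤ j'*q := Nat.mul_le_mul_right q hj'.1
    have h2 : (β+1)*q = β*q + q := by ring
    omega
  rw [rem_row hp hq hpq α β hα hβ hlow hhigh, sub_eq_add_neg, coeff_add, coeff_neg, coeff_neg]
  rw [coeff_sum_X_pow _ _ ?inj1, coeff_sum_X_pow _ _ ?inj2]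
  case inj1 =>
    intro x hx y hy hexy
    rw [Finset.mem_range] at hx hy
    exact (rep_unique hp.pos hcop (by omega : x < p) (by omega : y < p) hexy).2
  case inj2 =>
    intro x hx y hy hexy
    have hx' := hup _ hx
    have hy' := hup _ hy
    rw [Finset.mem_Ico] at hx hy
    have hexy2 : α*p + x*q = α*p + y*q := by omega
    exact (rep_unique hp.pos hcop (by omega : x < p) (by omega : y < p) hexy2).2
  have h₁ : (∃ j' ∈ range β, α*p + j'*q = k) ↔ (a*p+b*q = k ∧ a = α ∧ b < β) := by
    constructor
    · rintro ⟨j', hjmem, hje⟩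
      rw [Finset.mem_range] at hjmem
      rcases hv with hv | hv
      · have := rep_unique hp.pos hcop hb (by omega : j' < p) (by rw [hv, ← hje])
        exact ⟨hv, this.1, by omega⟩
      · exfalso
        have heq : a*p + b*q = (α + q)*p + j'*q := by
          have : (α+q)*p = α*p + q*p := by ring
          have hc : q*p = p*q := mul_comm _ _
          omega
        have := rep_unique hp.pos hcop hb (by omega : j' < p) heq
        omega
    · rintro ⟨hv1, rfl, hbβ⟩
      exact ⟨b, Finset.mem_range.mpr hbβ, hv1⟩
  have h₂ : (∃ j' ∈ Ico (β+1) p, α*p + j'*q - p*q = k) ↔ (a*p+b*q = k + p*q ∧ a = α ∧ β < b) := by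
    constructor
    · rintro ⟨j', hjmem, hje⟩
      have hj' := hup _ hjmem
      rw [Finset.mem_Ico] at hjmem
      have hje2 : α*p + j'*q = k + p*q := by omega
      rcases hv with hv | hv
      · exfalso
        have heq : α*p + j'*q = (a + q)*p + b*q := by
          have : (a+q)*p = a*p + q*p := by ring
          have hc : q*p = p*q := mul_comm _ _
          omega
        have := rep_unique hp.pos hcop (by omega : j' < p) hb heq
        omega
      · have := rep_unique hp.pos hcop (by omega : j' < p) hb (by rw [hje2, ← hv])
        exact ⟨hv, this.1.symm, by omega⟩
    · rintro ⟨hv1, rfl, hβb⟩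
      refine ⟨b, Finset.mem_Ico.mpr ⟨by omega, hb⟩, by omega⟩
  simp only [h₁, h₂]
  split_ifs <;> norm_num

end CyclCase3

namespace CyclCase4
open CyclHelp CyclHelp2 CyclCase CyclCase2 CyclCase3

variable {p q : ℕ}

lemma rem_case3 (hp : p.Prime) (hq : q.Prime) (hpq : p < q) (α β : ℕ) (hα : α < q) (hβ : β < p)
    (hβ1 : 1 ≤ β)
    (hlow : (p-1)*(q-1) + q ≤ α*p + β*q) (hhigh : α*p + β*q < p*q) :
    (X : ℤ[X])^(α*p+β*q) %ₘ cyclotomic (p*q) ℤ =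
      -(∑ u ∈ Ico 1 (p-1), (X:ℤ[X])^(u*q + (α*p+β*q) - p*q))
      - (X:ℤ[X])^(α*p+β*q - q) %ₘ cyclotomic (p*q) ℤ := by
  have hNf := Nfact hp.pos hq.pos
  have hqple : q ≤ p * q := Nat.le_mul_of_pos_left q hp.pos
  have hple : p ≤ p * q := Nat.le_mul_of_pos_right p hq.pos
  set m := α*p + β*q with hm
  have hmq : q ≤ m := by
    have : 1*q ≤ β*q := Nat.mul_le_mul_right q hβ1
    omega
  set W := (X:ℤ[X])^(m - q) %ₘ cyclotomic (p*q) ℤ with hW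
  have hWd : cyclotomic (p*q) ℤ ∣ W - (X:ℤ[X])^(m-q) := by
    rw [hW, modByMonic_eq_sub_mul_div _ _]
    exact ⟨-((X:ℤ[X])^(m-q) /ₘ cyclotomic (p*q) ℤ), by ring⟩
  have hup : ∀ u ∈ Ico 1 (p-1), p*q ≤ u*q + m ∧ u*q + m - p*q < (p-1)*(q-1) := by
    intro u hu
    rw [Finset.mem_Ico] at hu
    have h1 : 1*q ≤ u*q := Nat.mul_le_mul_right q hu.1
    have h2 : u*q + 2*q ≤ p*q := by
      calc u*q + 2*q = (u+2)*q := by ring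
        _ ≤ p*q := Nat.mul_le_mul_right q (by omega)
    omega
  apply mod_eq_of
  · have key : (X:ℤ[X])^m - (-(∑ u ∈ Ico 1 (p-1), (X:ℤ[X])^(u*q + m - p*q)) - W) =
        ((X:ℤ[X])^m + (∑ u ∈ Ico 1 (p-1), (X:ℤ[X])^(u*q + m - p*q)) + (X:ℤ[X])^(m-q))
        + (W - (X:ℤ[X])^(m-q)) := by ring
    rw [key]
    refine dvd_add ?_ hWd
    apply dvd_of_dvd_shift
    set B := (X:ℤ[X])^m + (∑ u ∈ Ico 1 (p-1), (X:ℤ[X])^(u*q + m - p*q)) + (X:ℤ[X])^(m-q) with hB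
    have hXB : (X:ℤ[X])^(p*q) * B =
        (X:ℤ[X])^m * (∑ u ∈ range p, (X:ℤ[X])^(u*q)) + (X:ℤ[X])^m * ((X:ℤ[X])^(p*q) - 1) := by
      rw [hB]
      have hS : (X:ℤ[X])^(p*q) * (∑ u ∈ Ico 1 (p-1), (X:ℤ[X])^(u*q + m - p*q)) =
          ∑ u ∈ Ico 1 (p-1), (X:ℤ[X])^(m + u*q) := by
        rw [Finset.mul_sum]
        refine Finset.sum_congr rfl fun u hu => ?_
        rw [← pow_add]
        congr 1
        have := (hup u hu).1
        omega
      have hEP : (X:ℤ[X])^m * (∑ u ∈ range p, (X:ℤ[X])^(u*q)) =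
          (X:ℤ[X])^m + (∑ u ∈ Ico 1 (p-1), (X:ℤ[X])^(m + u*q)) + (X:ℤ[X])^(m + (p-1)*q) := by
        rw [Finset.mul_sum]
        simp_rw [← pow_add]
        rw [← Finset.sum_range_add_sum_Ico (fun u => (X:ℤ[X])^(m+u*q)) (by omega : p-1 ≤ p)]
        have h1 : ∑ u ∈ Ico (p-1) p, (X:ℤ[X])^(m+u*q) = (X:ℤ[X])^(m + (p-1)*q) := by
          have : Ico (p-1) p = {p-1} := by
            rw [← Nat.Ico_succ_singleton]
            congr 1
            omega
          rw [this, Finset.sum_singleton]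
        rw [h1, ← Finset.sum_range_add_sum_Ico (fun u => (X:ℤ[X])^(m+u*q)) (by omega : 1 ≤ p-1)]
        have h2 : ∑ u ∈ range 1, (X:ℤ[X])^(m+u*q) = (X:ℤ[X])^m := by simp
        rw [h2]
      have hmq2 : (X:ℤ[X])^(p*q) * (X:ℤ[X])^(m-q) = (X:ℤ[X])^(m + (p-1)*q) := by
        rw [← pow_add]
        congr 1
        have h3 : (p-1)*q + q = p*q := by
          calc (p-1)*q + q = (p-1+1)*q := by ring
            _ = p*q := by congr 1; omega
        omega
      rw [mul_add, mul_add, hS, hmq2, hEP]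
      ring
    rw [hXB]
    exact dvd_add (Dvd.dvd.mul_left (dvd_EP hp hq hpq.ne) _)
      (Dvd.dvd.mul_left dvd_pow_sub_one _)
  · have htot : (cyclotomic (p*q) ℤ).degree = (((p-1)*(q-1) : ℕ) : WithBot ℕ) := by
      rw [degree_cyclotomic, Nat.totient_mul ((Nat.coprime_primes hp hq).mpr hpq.ne),
        Nat.totient_prime hp, Nat.totient_prime hq]
    rw [sub_eq_add_neg]
    refine lt_of_le_of_lt (degree_add_le _ _) (max_lt ?_ ?_)
    · rw [degree_neg, htot]
      refine deg_sum_lt _ _ _ ?_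
      intro u hu
      exact (hup u hu).2
    · rw [degree_neg]
      exact degree_modByMonic_lt _ (cyclotomic.monic _ _)

lemma coeff_case3 (hp : p.Prime) (hq : q.Prime) (hpq : p < q) (α β : ℕ) (hα : α < q) (hβ : β < p)
    (hβ1 : 1 ≤ β)
    (hlow : (p-1)*(q-1) + q ≤ α*p + β*q) (hhigh : α*p + β*q < p*q)
    (k a b : ℕ) (hk : k < (p-1)*(q-1)) (ha : a < q) (hb : b < p)
    (hv : a*p+b*q = k ∨ a*p+b*q = k+p*q) :
    ((X:ℤ[X])^(α*p+β*q) %ₘ cyclotomic (p*q) ℤ).coeff k =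
      (if a = α then (-1:ℤ) else 0)
    + (if a*p+b*q = k ∧ a ≤ α ∧ b < β then 1 else 0)
    + (if a*p+b*q = k + p*q ∧ α < a ∧ β ≤ b then -1 else 0) := by
  have hcop : Nat.Coprime p q := (Nat.coprime_primes hp hq).mpr hpq.ne
  have hNf := Nfact hp.pos hq.pos
  have hqple : q ≤ p * q := Nat.le_mul_of_pos_left q hp.pos
  have hmq : q ≤ α*p + β*q := by
    have : 1*q ≤ β*q := Nat.mul_le_mul_right q hβ1
    omega
  have hrepq : α*p + β*q - q = α*p + (β-1)*q := by
    have : (β-1)*q + 1*q = β*q := by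
      calc (β-1)*q + 1*q = (β-1+1)*q := by ring
        _ = β*q := by congr 1; omega
    omega
  have hup : ∀ u ∈ Ico 1 (p-1), p*q ≤ u*q + (α*p+β*q) := by
    intro u hu
    rw [Finset.mem_Ico] at hu
    have h1 : 1*q ≤ u*q := Nat.mul_le_mul_right q hu.1
    omega
  rw [rem_case3 hp hq hpq α β hα hβ hβ1 hlow hhigh, sub_eq_add_neg, coeff_add, coeff_neg,
    coeff_neg, hrepq]
  rw [coeff_rect hp hq hpq α (β-1) hα (by omega) (by omega) (by omega) k a b hk ha hb hv]
  rw [coeff_sum_X_pow _ _ ?inj1]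
  case inj1 =>
    intro x hx y hy hexy
    have hx' := hup _ hx
    have hy' := hup _ hy
    rw [Finset.mem_Ico] at hx hy
    have hexy2 : x*q = y*q := by omega
    exact Nat.eq_of_mul_eq_mul_right hq.pos hexy2
  have h₁ : (∃ u ∈ Ico 1 (p-1), u*q + (α*p+β*q) - p*q = k) ↔ (a = α) := by
    constructor
    · rintro ⟨u, humem, hue⟩
      have hu' := hup _ humem
      rw [Finset.mem_Ico] at humem
      have hue2 : α*p + β*q + u*q = k + p*q := by omega
      have h1 : α*p % q = a*p % q := by
        have e1 : (α*p + β*q + u*q) % q = α*p % q := by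
          rw [Nat.add_mul_mod_self_right, Nat.add_mul_mod_self_right]
        have e2 : (k + p*q) % q = k % q := Nat.add_mul_mod_self_right k p q
        have e3 : k % q = a*p % q := by
          rcases hv with hv | hv
          · rw [← hv, Nat.add_mul_mod_self_right]
          · have e4 : (k + p*q) % q = (a*p + b*q) % q := by rw [hv]
            rw [Nat.add_mul_mod_self_right, Nat.add_mul_mod_self_right] at e4
            exact e4
        rw [← e1, hue2, e2, e3]
      exact (cancel_mod hcop.symm hα ha h1).symm
    · rintro rfl
      have h1 : a*p % q = k % q := by
        rcases hv with hv | hv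
        · rw [← hv, Nat.add_mul_mod_self_right]
        · have e4 : (k + p*q) % q = (a*p + b*q) % q := by rw [hv]
          rw [Nat.add_mul_mod_self_right, Nat.add_mul_mod_self_right] at e4
          exact e4.symm
      have h3 : a*p + β*q < k + p*q := by omega
      obtain ⟨d, hd⟩ : ∃ d, k + p*q = a*p + β*q + d := ⟨k + p*q - (a*p+β*q), by omega⟩
      have hdq : q ∣ d := by
        have e5 : (a*p + d + β*q) % q = k % q := by
          rw [(by ring : a*p + d + β*q = a*p + β*q + d), ← hd, Nat.add_mul_mod_self_right]
        rw [Nat.add_mul_mod_self_right] at e5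
        have e6 : a*p + d ≡ a*p + 0 [MOD q] := by
          unfold Nat.ModEq
          rw [Nat.add_zero, e5, h1]
        have e7 : d ≡ 0 [MOD q] := Nat.ModEq.add_left_cancel' _ e6
        exact (Nat.modEq_zero_iff_dvd).mp e7
      obtain ⟨u, hu⟩ := hdq
      have huq : u*q = q*u := mul_comm _ _
      have hult : u < p - 1 := by
        have h6 : u*q < (p-1)*q := by
          have h7 : (p-1)*q + q = p*q := by
            calc (p-1)*q + q = (p-1+1)*q := by ring
              _ = p*q := by congr 1; omega
          omega
        exact Nat.lt_of_mul_lt_mul_right h6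
      have hu1 : 1 ≤ u := by
        rcases Nat.eq_zero_or_pos u with h0 | h
        · have hd0 : d = 0 := by rw [h0] at hu; simpa using hu
          omega
        · exact h
      exact ⟨u, Finset.mem_Ico.mpr ⟨hu1, hult⟩, by omega⟩
  have h₂ : (a*p+b*q = k ∧ a ≤ α ∧ b ≤ β-1) ↔ (a*p+b*q = k ∧ a ≤ α ∧ b < β) := by
    constructor <;> (rintro ⟨h1, h2, h3⟩; exact ⟨h1, h2, by omega⟩)
  have h₃ : (a*p+b*q = k+p*q ∧ α < a ∧ β-1 < b) ↔ (a*p+b*q = k+p*q ∧ α < a ∧ β ≤ b) := by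
    constructor <;> (rintro ⟨h1, h2, h3⟩; exact ⟨h1, h2, by omega⟩)
  simp only [h₁, h₂, h₃]
  split_ifs <;> norm_num

end CyclCase4

namespace CyclMain
open CyclHelp CyclHelp2 CyclCase CyclCase2 CyclCase3 CyclCase4

variable {p q : ℕ}

lemma coeff_small (hp : p.Prime) (hq : q.Prime) (hpq : p < q) (m k : ℕ)
    (hm : m < (p-1)*(q-1)) :
    ((X:ℤ[X])^m %ₘ cyclotomic (p*q) ℤ).coeff k = if m = k then 1 else 0 := by
  have htot : (cyclotomic (p*q) ℤ).degree = (((p-1)*(q-1) : ℕ) : WithBot ℕ) := by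
    rw [degree_cyclotomic, Nat.totient_mul ((Nat.coprime_primes hp hq).mpr hpq.ne),
      Nat.totient_prime hp, Nat.totient_prime hq]
  rw [(modByMonic_eq_self_iff (cyclotomic.monic _ _)).mpr
    (by rw [htot, degree_X_pow]; exact_mod_cast WithBot.coe_lt_coe.mpr hm), coeff_X_pow]
  simp [eq_comm]

lemma rep_exact (hp : p.Prime) (hq : q.Prime) (hpq : p < q) {m : ℕ}
    (hmN : (p-1)*(q-1) ≤ m) (hm : m < p*q) :
    ∃ α β, α < q ∧ β < p ∧ m = α*p+β*q := by
  have hNf := Nfact hp.pos hq.pos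
  obtain ⟨a, b, ha, hb, hv⟩ := rep_exists hp hq hpq.ne m hm
  rcases hv with hv | hv
  · exact ⟨a, b, ha, hb, hv.symm⟩
  · exfalso
    have h1 : a*p + p ≤ q*p := by
      calc a*p + p = (a+1)*p := by ring
        _ ≤ q*p := Nat.mul_le_mul_right p ha
    have h2 : b*q + q ≤ p*q := by
      calc b*q + q = (b+1)*q := by ring
        _ ≤ p*q := Nat.mul_le_mul_right q hb
    have h3 : q*p = p*q := mul_comm _ _
    omega

lemma sum_rem_zero (hp : p.Prime) (hq : q.Prime) (hpq : p < q) (j k : ℕ) :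
    ∑ i ∈ range q, ((X:ℤ[X])^(j+i*p) %ₘ cyclotomic (p*q) ℤ).coeff k = 0 := by
  have e1 : ∑ i ∈ range q, ((X:ℤ[X])^(j+i*p) %ₘ cyclotomic (p*q) ℤ) =
      (∑ i ∈ range q, (X:ℤ[X])^(j+i*p)) %ₘ cyclotomic (p*q) ℤ := by
    have := map_sum (modByMonicHom (cyclotomic (p*q) ℤ))
      (fun i => (X:ℤ[X])^(j+i*p)) (range q)
    simp only [modByMonicHom_apply] at this
    exact this.symm
  have e2 : (∑ i ∈ range q, (X:ℤ[X])^(j+i*p)) = X^j * ∑ i ∈ range q, (X:ℤ[X])^(i*p) := by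
    rw [Finset.mul_sum]
    exact Finset.sum_congr rfl fun i _ => by rw [← pow_add]
  have e3 : (∑ i ∈ range q, (X:ℤ[X])^(j+i*p)) %ₘ cyclotomic (p*q) ℤ = 0 := by
    rw [modByMonic_eq_zero_iff_dvd (cyclotomic.monic _ _), e2]
    exact Dvd.dvd.mul_left (dvd_EQ hp hq hpq.ne) _
  calc ∑ i ∈ range q, ((X:ℤ[X])^(j+i*p) %ₘ cyclotomic (p*q) ℤ).coeff k
      = (∑ i ∈ range q, ((X:ℤ[X])^(j+i*p) %ₘ cyclotomic (p*q) ℤ)).coeff k :=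
        (finset_sum_coeff _ _ _).symm
    _ = 0 := by rw [e1, e3]; simp

lemma engine (hp : p.Prime) (hq : q.Prime) (hpq : p < q) (k j a b : ℕ)
    (hk : k < (p-1)*(q-1)) (hj : j < p) (ha : a < q) (hb : b < p)
    (hv : a*p+b*q = k ∨ a*p+b*q = k+p*q) (i : ℕ) (hi : i < q) :
    (((X:ℤ[X])^(j+i*p) %ₘ cyclotomic (p*q) ℤ).coeff k = 0 ∨
     ((X:ℤ[X])^(j+i*p) %ₘ cyclotomic (p*q) ℤ).coeff k = 1 ∨
     ((X:ℤ[X])^(j+i*p) %ₘ cyclotomic (p*q) ℤ).coeff k = -1) ∧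
    (((X:ℤ[X])^(j+i*p) %ₘ cyclotomic (p*q) ℤ).coeff k = 1 →
      ((j+i*p < (p-1)*(q-1) ∧ j+i*p = k) ∨
       ((p-1)*(q-1) ≤ j+i*p ∧ j+i*p ≤ p*q - q ∧
         ∃ α β, α < q ∧ β < p ∧ j+i*p = α*p+β*q ∧ a*p+b*q = k+p*q ∧ β < b) ∨
       ((p-1)*(q-1) + q ≤ j+i*p ∧ j+i*p < p*q ∧
         ∃ α β, α < q ∧ β < p ∧ j+i*p = α*p+β*q ∧ a*p+b*q = k ∧ b < β))) := by
  have hNf := Nfact hp.pos hq.pos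
  have hpqpos : 0 < p*q := Nat.mul_pos hp.pos hq.pos
  have hqple : q ≤ p * q := Nat.le_mul_of_pos_left q hp.pos
  have hsubq : p*q - q + q = p*q := Nat.sub_add_cancel hqple
  have him : j + i*p < p*q := by
    have h1 : i*p + p ≤ q*p := by
      calc i*p + p = (i+1)*p := by ring
        _ ≤ q*p := Nat.mul_le_mul_right p hi
    have h2 : q*p = p*q := mul_comm _ _
    omega
  rcases Nat.lt_or_ge (j+i*p) ((p-1)*(q-1)) with hsm | hbig
  · have hc := coeff_small hp hq hpq (j+i*p) k hsm
    split_ifs at hc with h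
    · exact ⟨Or.inr (Or.inl hc), fun _ => Or.inl ⟨hsm, h⟩⟩
    · exact ⟨Or.inl hc, fun h1 => absurd (hc ▸ h1) (by norm_num)⟩
  · obtain ⟨α, β, hα, hβ, hrep⟩ := rep_exact hp hq hpq hbig him
    rcases le_or_gt (j+i*p) (p*q - q) with hr1 | hr2
    · -- rect case
      have hc := coeff_rect hp hq hpq α β hα hβ (hrep ▸ hbig) (hrep ▸ hr1) k a b hk ha hb hv
      rw [← hrep] at hc
      split_ifs at hc with h1 h2 h2
      · -- both: impossible
        exfalso
        have e1 := h1.1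
        have e2 := h2.1
        omega
      · norm_num at hc
        exact ⟨Or.inr (Or.inr hc), fun hx => absurd (hc ▸ hx) (by norm_num)⟩
      · norm_num at hc
        exact ⟨Or.inr (Or.inl hc), fun _ =>
          Or.inr (Or.inl ⟨hbig, hr1, α, β, hα, hβ, hrep, h2.1, h2.2.2⟩)⟩
      · norm_num at hc
        exact ⟨Or.inl hc, fun hx => absurd (hc ▸ hx) (by norm_num)⟩
    · rcases Nat.lt_or_ge (j+i*p) ((p-1)*(q-1) + q) with hrow | hc3
      · -- row case
        have hc := coeff_row hp hq hpq α β hα hβ (hrep ▸ hr2) (hrep ▸ hrow) k a b hk ha hb hv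
        rw [← hrep] at hc
        split_ifs at hc with h1 h2 h2
        · exfalso
          have e1 := h1.1
          have e2 := h2.1
          omega
        · norm_num at hc
          exact ⟨Or.inr (Or.inr hc), fun hx => absurd (hc ▸ hx) (by norm_num)⟩
        · norm_num at hc
          exact ⟨Or.inr (Or.inr hc), fun hx => absurd (hc ▸ hx) (by norm_num)⟩
        · norm_num at hc
          exact ⟨Or.inl hc, fun hx => absurd (hc ▸ hx) (by norm_num)⟩
      · -- case3
        have hβ1 : 1 ≤ β := by
          by_contra hβ0
          have hβe : β = 0 := by omega
          rw [hβe] at hrep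
          have h1 : α*p + p ≤ q*p := by
            calc α*p + p = (α+1)*p := by ring
              _ ≤ q*p := Nat.mul_le_mul_right p hα
          have h2 : q*p = p*q := mul_comm _ _
          omega
        have hc := coeff_case3 hp hq hpq α β hα hβ hβ1 (hrep ▸ hc3) (hrep ▸ him) k a b hk ha hb hv
        rw [← hrep] at hc
        by_cases h1 : a = α
        · by_cases h2 : a*p+b*q = k ∧ a ≤ α ∧ b < β
          · have h3 : ¬(a*p+b*q = k+p*q ∧ α < a ∧ β ≤ b) := by
              rintro ⟨e1, _, _⟩
              have e2 := h2.1
              omega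
            rw [if_pos h1, if_pos h2, if_neg h3] at hc
            norm_num at hc
            exact ⟨Or.inl hc, fun hx => absurd (hc ▸ hx) (by norm_num)⟩
          · by_cases h3 : a*p+b*q = k+p*q ∧ α < a ∧ β ≤ b
            · exfalso
              have := h3.2.1
              omega
            · rw [if_pos h1, if_neg h2, if_neg h3] at hc
              norm_num at hc
              exact ⟨Or.inr (Or.inr hc), fun hx => absurd (hc ▸ hx) (by norm_num)⟩
        · by_cases h2 : a*p+b*q = k ∧ a ≤ α ∧ b < β
          · have h3 : ¬(a*p+b*q = k+p*q ∧ α < a ∧ β ≤ b) := by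
              rintro ⟨e1, _, _⟩
              have e2 := h2.1
              omega
            rw [if_neg h1, if_pos h2, if_neg h3] at hc
            norm_num at hc
            exact ⟨Or.inr (Or.inl hc), fun _ =>
              Or.inr (Or.inr ⟨hc3, him, α, β, hα, hβ, hrep, h2.1, h2.2.2⟩)⟩
          · by_cases h3 : a*p+b*q = k+p*q ∧ α < a ∧ β ≤ b
            · rw [if_neg h1, if_neg h2, if_pos h3] at hc
              norm_num at hc
              exact ⟨Or.inr (Or.inr hc), fun hx => absurd (hc ▸ hx) (by norm_num)⟩
            · rw [if_neg h1, if_neg h2, if_neg h3] at hc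
              norm_num at hc
              exact ⟨Or.inl hc, fun hx => absurd (hc ▸ hx) (by norm_num)⟩

end CyclMain

theorem coeff_nonzero_at_most_two (p q k j : ℕ) (hp : p.Prime) (hq : q.Prime)
    (hpq : p < q) (hk : k < Nat.totient (p * q)) (hj : j < p) :
    ((Finset.range q).filter
        (fun i => (X ^ (j + i * p) %ₘ cyclotomic (p * q) ℤ).coeff k ≠ 0)).card ≤ 2 ∧
    (∑ i ∈ Finset.range q, (X ^ (j + i * p) %ₘ cyclotomic (p * q) ℤ).coeff k) = 0 ∧
    ((∀ i < q, (X ^ (j + i * p) %ₘ cyclotomic (p * q) ℤ).coeff k = 0) ∨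
      (∃ i₁ < q, ∃ i₂ < q, i₁ ≠ i₂ ∧
        (X ^ (j + i₁ * p) %ₘ cyclotomic (p * q) ℤ).coeff k = 1 ∧
        (X ^ (j + i₂ * p) %ₘ cyclotomic (p * q) ℤ).coeff k = -1 ∧
        ∀ i < q, i ≠ i₁ → i ≠ i₂ →
          (X ^ (j + i * p) %ₘ cyclotomic (p * q) ℤ).coeff k = 0)) := by
  have hcop : Nat.Coprime p q := (Nat.coprime_primes hp hq).mpr hpq.ne
  have hNf := CyclCase.Nfact hp.pos hq.pos
  have hpqpos : 0 < p*q := Nat.mul_pos hp.pos hq.pos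
  have hqple : q ≤ p * q := Nat.le_mul_of_pos_left q hp.pos
  have hsubq : p*q - q + q = p*q := Nat.sub_add_cancel hqple
  have htot : Nat.totient (p*q) = (p-1)*(q-1) := by
    rw [Nat.totient_mul hcop, Nat.totient_prime hp, Nat.totient_prime hq]
  rw [htot] at hk
  have hkpq : k < p*q := by omega
  obtain ⟨a, b, ha, hb, hv⟩ := CyclHelp.rep_exists hp hq hpq.ne k hkpq
  have heng := fun i (hi : i < q) => CyclMain.engine hp hq hpq k j a b hk hj ha hb hv i hi
  have hvals := fun i (hi : i < q) => (heng i hi).1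
  have hplus := fun i (hi : i < q) => (heng i hi).2
  have hsum := CyclMain.sum_rem_zero hp hq hpq j k
  -- uniqueness of +1
  have huniq : ∀ i, i < q → ∀ i', i' < q →
      ((X:ℤ[X]) ^ (j + i * p) %ₘ cyclotomic (p * q) ℤ).coeff k = 1 →
      ((X:ℤ[X]) ^ (j + i' * p) %ₘ cyclotomic (p * q) ℤ).coeff k = 1 → i = i' := by
    intro i hi i' hi' h1 h1'
    have hjq : ∀ x : ℕ, (j + x*p) % p = j % p := fun x => Nat.add_mul_mod_self_right j x p
    have hm1 : ∀ x y : ℕ, (x*p + y*q) % p = y*q % p := fun x y => by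
      rw [Nat.add_comm, Nat.add_mul_mod_self_right]
    have hm2 : ∀ x : ℕ, (x + p*q) % p = x % p := fun x => Nat.add_mul_mod_self_left x p q
    have hstep : ∀ {x y : ℕ}, x < y → x*p + p ≤ y*p := by
      intro x y hxy
      calc x*p + p = (x+1)*p := by ring
        _ ≤ y*p := Nat.mul_le_mul_right p hxy
    rcases hplus i hi h1 with ⟨hsm, hek⟩ | ⟨hb1, hb2, α, β, hα, hβ, hrep, hvv, hbβ⟩ |
        ⟨hb1, hb2, α, β, hα, hβ, hrep, hvv, hbβ⟩ <;>
      rcases hplus i' hi' h1' with ⟨hsm', hek'⟩ | ⟨hb1', hb2', α', β', hα', hβ', hrep', hvv', hbβ'⟩ |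
        ⟨hb1', hb2', α', β', hα', hβ', hrep', hvv', hbβ'⟩
    · exact Nat.eq_of_mul_eq_mul_right hp.pos (by omega)
    · exfalso
      have c1 : b*q % p = k % p      := by rw [← hm1 a b, hvv', hm2]
      have c2 : β'*q % p = j % p      := by rw [← hm1 α' β', ← hrep', hjq i']
      have c3 : k % p = j % p      := by rw [← hek, hjq i]
      have : b = β' := CyclHelp.cancel_mod hcop hb hβ' (by unfold Nat.ModEq; rw [c1, c3, c2])
      omega
    · exfalso
      have c1 : b*q % p = k % p      := by rw [← hm1 a b, hvv']
      have c2 : β'*q % p = j % p      := by rw [← hm1 α' β', ← hrep', hjq i']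
      have c3 : k % p = j % p      := by rw [← hek, hjq i]
      have : b = β' := CyclHelp.cancel_mod hcop hb hβ' (by unfold Nat.ModEq; rw [c1, c3, c2])
      omega
    · exfalso
      have c1 : b*q % p = k % p      := by rw [← hm1 a b, hvv, hm2]
      have c2 : β*q % p = j % p      := by rw [← hm1 α β, ← hrep, hjq i]
      have c3 : k % p = j % p      := by rw [← hek', hjq i']
      have : b = β := CyclHelp.cancel_mod hcop hb hβ (by unfold Nat.ModEq; rw [c1, c3, c2])
      omega
    · rcases lt_trichotomy i i' with hlt | he | hlt
      · exfalso; have := hstep hlt; omega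
      · exact he
      · exfalso; have := hstep hlt; omega
    · exfalso; omega
    · exfalso
      have c1 : b*q % p = k % p      := by rw [← hm1 a b, hvv]
      have c2 : β*q % p = j % p      := by rw [← hm1 α β, ← hrep, hjq i]
      have c3 : k % p = j % p      := by rw [← hek', hjq i']
      have : b = β := CyclHelp.cancel_mod hcop hb hβ (by unfold Nat.ModEq; rw [c1, c3, c2])
      omega
    · exfalso; omega
    · rcases lt_trichotomy i i' with hlt | he | hlt
      · exfalso; have := hstep hlt; omega
      · exact he
      · exfalso; have := hstep hlt; omega
  -- main disjunction
  have hdisj : (∀ i < q, ((X:ℤ[X]) ^ (j + i * p) %ₘ cyclotomic (p * q) ℤ).coeff k = 0) ∨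
      (∃ i₁ < q, ∃ i₂ < q, i₁ ≠ i₂ ∧
        ((X:ℤ[X]) ^ (j + i₁ * p) %ₘ cyclotomic (p * q) ℤ).coeff k = 1 ∧
        ((X:ℤ[X]) ^ (j + i₂ * p) %ₘ cyclotomic (p * q) ℤ).coeff k = -1 ∧
        ∀ i < q, i ≠ i₁ → i ≠ i₂ →
          ((X:ℤ[X]) ^ (j + i * p) %ₘ cyclotomic (p * q) ℤ).coeff k = 0) := by
    by_cases hex : ∃ i, i < q ∧ ((X:ℤ[X]) ^ (j + i * p) %ₘ cyclotomic (p * q) ℤ).coeff k = 1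
    · obtain ⟨i₁, hi₁, hC1⟩ := hex
      right
      have hmem1 : i₁ ∈ range q := mem_range.mpr hi₁
      have hsplit := Finset.add_sum_erase (range q)
        (fun i => ((X:ℤ[X]) ^ (j + i * p) %ₘ cyclotomic (p * q) ℤ).coeff k) hmem1
      beta_reduce at hsplit
      rw [hsum] at hsplit
      have hrest : ∑ i ∈ (range q).erase i₁,
          ((X:ℤ[X]) ^ (j + i * p) %ₘ cyclotomic (p * q) ℤ).coeff k = -1 := by
        rw [hC1] at hsplit; linarith
      have hle : ∀ i ∈ (range q).erase i₁,
          ((X:ℤ[X]) ^ (j + i * p) %ₘ cyclotomic (p * q) ℤ).coeff k ≤ 0 := by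
        intro i hi
        obtain ⟨hne, hiq⟩ := Finset.mem_erase.mp hi
        rw [Finset.mem_range] at hiq
        rcases hvals i hiq with h | h | h
        · omega
        · exact absurd (huniq i hiq i₁ hi₁ h hC1) hne
        · omega
      have hex2 : ∃ i₂ ∈ (range q).erase i₁,
          ((X:ℤ[X]) ^ (j + i₂ * p) %ₘ cyclotomic (p * q) ℤ).coeff k = -1 := by
        by_contra hno
        push_neg at hno
        have hallz : ∀ i ∈ (range q).erase i₁,
            ((X:ℤ[X]) ^ (j + i * p) %ₘ cyclotomic (p * q) ℤ).coeff k = 0 := by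
          intro i hi
          obtain ⟨hne, hiq⟩ := Finset.mem_erase.mp hi
          rw [Finset.mem_range] at hiq
          rcases hvals i hiq with h | h | h
          · exact h
          · exact absurd (huniq i hiq i₁ hi₁ h hC1) hne
          · exact absurd h (hno i hi)
        rw [Finset.sum_eq_zero hallz] at hrest
        norm_num at hrest
      obtain ⟨i₂, hi₂mem, hC2⟩ := hex2
      obtain ⟨hne21, hi₂r⟩ := Finset.mem_erase.mp hi₂mem
      rw [Finset.mem_range] at hi₂r
      have hsplit2 := Finset.add_sum_erase ((range q).erase i₁)
        (fun i => ((X:ℤ[X]) ^ (j + i * p) %ₘ cyclotomic (p * q) ℤ).coeff k) hi₂mem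
      beta_reduce at hsplit2
      have hsum2 : ∑ i ∈ ((range q).erase i₁).erase i₂,
          ((X:ℤ[X]) ^ (j + i * p) %ₘ cyclotomic (p * q) ℤ).coeff k = 0 := by
        rw [hC2] at hsplit2; linarith [hrest]
      have hzero := (Finset.sum_eq_zero_iff_of_nonpos
        (fun i hi => hle i (Finset.mem_of_mem_erase hi))).mp hsum2
      refine ⟨i₁, hi₁, i₂, hi₂r, Ne.symm hne21, hC1, hC2, ?_⟩
      intro i hiq hne1 hne2
      exact hzero i (Finset.mem_erase.mpr ⟨hne2, Finset.mem_erase.mpr ⟨hne1, mem_range.mpr hiq⟩⟩)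
    · left
      have hle : ∀ i ∈ range q,
          ((X:ℤ[X]) ^ (j + i * p) %ₘ cyclotomic (p * q) ℤ).coeff k ≤ 0 := by
        intro i hi
        rw [Finset.mem_range] at hi
        rcases hvals i hi with h | h | h
        · omega
        · exact absurd ⟨i, hi, h⟩ hex
        · omega
      intro i hi
      exact (Finset.sum_eq_zero_iff_of_nonpos hle).mp hsum i (mem_range.mpr hi)
  refine ⟨?_, hsum, hdisj⟩
  rcases hdisj with hall | ⟨i₁, hi₁, i₂, hi₂, hne, h1, h2, hrest⟩
  · have : ((Finset.range q).filter
        (fun i => (X ^ (j + i * p) %ₘ cyclotomic (p * q) ℤ).coeff k ≠ 0)) = ∅ := by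
      refine Finset.filter_eq_empty_iff.mpr ?_
      intro i hi
      rw [Finset.mem_range] at hi
      simpa using hall i hi
    rw [this]
    simp
  · have hsub : ((Finset.range q).filter
        (fun i => (X ^ (j + i * p) %ₘ cyclotomic (p * q) ℤ).coeff k ≠ 0)) ⊆ {i₁, i₂} := by
      intro i hi
      obtain ⟨hir, hnz⟩ := Finset.mem_filter.mp hi
      rw [Finset.mem_range] at hir
      rw [Finset.mem_insert, Finset.mem_singleton]
      by_contra hcon
      push_neg at hcon
      exact hnz (hrest i hir hcon.1 hcon.2)
    calc ((Finset.range q).filter _).card ≤ ({i₁, i₂} : Finset ℕ).card :=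
          Finset.card_le_card hsub
      _ ≤ 2 := by
          refine le_trans (Finset.card_insert_le _ _) ?_
          simp
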